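/- Let r, c, m, p > 0 and 0 < a < 1, and let F(u, v) = (r·u·(1−u)·(u−a) − (1+c·v)·u·v, m·v·(p·u·(1+c·v) − 1)) be the vector field of the system. Then: (i) the Jacobian matrix of F at (0,0) is diagonal with eigenvalues −r·a and −m, both negative; (ii) the Jacobian at (a,0) is upper triangular with eigenvalues r·a·(1−a) > 0 and m·(p·a−1), so it has one positive and one negative eigenvalue (saddle) if p < 1/a, and two positive eigenvalues (unstable node) if p > 1/a; (iii) the Jacobian at (1,0) is upper triangular with eigenvalues −r·(1−a) < 0 and m·(p−1), so it has two negative eigenvalues (stable node) if p < 1, and one positive and one negative eigenvalue (saddle) if p > 1. -/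

import Mathlib

/-- The vector field of the predator-prey system with cooperative hunting and
Allee effect, on `Fin 2 → ℝ`. -/
noncomputable def vectorField (r c m p a : ℝ) (x : Fin 2 → ℝ) : Fin 2 → ℝ :=
  ![r * x 0 * (1 - x 0) * (x 0 - a) - (1 + c * x 1) * x 0 * x 1,
    m * x 1 * (p * x 0 * (1 + c * x 1) - 1)]

lemma vectorField_hasFDerivAt (r c m p a u J K L : ℝ)
    (hJ : J = r * ((1 - u) * (u - a) + u * (u - a) * (-1) + u * (1 - u)))
    (hK : K = -u) (hL : L = m * (p * u - 1)) :
    HasFDerivAt (vectorField r c m p a)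
      (LinearMap.toContinuousLinearMap (Matrix.toLin' !![J, K; 0, L]))
      ![u, 0] := by
  rw [hasFDerivAt_pi']
  set q : Fin 2 → ℝ := ![u, 0] with hq
  have p0 : HasFDerivAt (fun x : Fin 2 → ℝ => x 0)
      (ContinuousLinearMap.proj (R := ℝ) (φ := fun _ : Fin 2 => ℝ) 0) q :=
    hasFDerivAt_apply (𝕜 := ℝ) 0 q
  have p1 : HasFDerivAt (fun x : Fin 2 → ℝ => x 1)
      (ContinuousLinearMap.proj (R := ℝ) (φ := fun _ : Fin 2 => ℝ) 1) q :=
    hasFDerivAt_apply (𝕜 := ℝ) 1 q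
  intro i
  fin_cases i
  · have h0 := ((((hasFDerivAt_const r q).mul p0).mul ((hasFDerivAt_const 1 q).sub p0)).mul
      (p0.sub (hasFDerivAt_const a q))).sub
      ((((hasFDerivAt_const 1 q).add ((hasFDerivAt_const c q).mul p1)).mul p0).mul p1)
    convert h0 using 1
    · funext x
      simp [vectorField]
    ext h
    subst hJ hK
    simp [Matrix.toLin'_apply, Matrix.mulVec, dotProduct, Fin.sum_univ_two, hq,
      Matrix.vecHead, Matrix.vecTail]
    try ring
  · have h1 := (((hasFDerivAt_const m q).mul p1).mul
      ((((hasFDerivAt_const p q).mul p0).mul ((hasFDerivAt_const 1 q).add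
        ((hasFDerivAt_const c q).mul p1))).sub (hasFDerivAt_const 1 q)))
    convert h1 using 1
    case e'_11 =>
      funext x
      simp [vectorField]
    case e'_8 => rfl
    case e'_12 =>
      ext h
      subst hL
      simp [Matrix.toLin'_apply, Matrix.mulVec, dotProduct, Fin.sum_univ_two, hq,
        Matrix.vecHead, Matrix.vecTail]
      try ring

/-- Jacobian matrices of the system at the boundary equilibria `E₀ = (0,0)`,
`E_a = (a,0)`, `E₁ = (1,0)`, together with the signs of their (diagonal)
eigenvalues. -/
theorem stmt_10 (r c m p a : ℝ) (hr : 0 < r) (hc : 0 < c) (hm : 0 < m) (hp : 0 < p)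
    (ha0 : 0 < a) (ha1 : a < 1) :
    (HasFDerivAt (vectorField r c m p a)
        (LinearMap.toContinuousLinearMap (Matrix.toLin' !![-(r * a), 0; 0, -m]))
        ![0, 0] ∧
      -(r * a) < 0 ∧ -m < 0) ∧
    (HasFDerivAt (vectorField r c m p a)
        (LinearMap.toContinuousLinearMap
          (Matrix.toLin' !![r * a * (1 - a), -a; 0, m * (p * a - 1)]))
        ![a, 0] ∧
      0 < r * a * (1 - a) ∧
      (p < 1 / a → m * (p * a - 1) < 0) ∧
      (1 / a < p → 0 < m * (p * a - 1))) ∧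
    (HasFDerivAt (vectorField r c m p a)
        (LinearMap.toContinuousLinearMap
          (Matrix.toLin' !![-(r * (1 - a)), -1; 0, m * (p - 1)]))
        ![1, 0] ∧
      -(r * (1 - a)) < 0 ∧
      (p < 1 → m * (p - 1) < 0) ∧
      (1 < p → 0 < m * (p - 1))) := by
  refine ⟨⟨vectorField_hasFDerivAt r c m p a 0 _ _ _ (by ring) (by ring) (by ring),
      ?_, by linarith⟩,
    ⟨vectorField_hasFDerivAt r c m p a a _ _ _ (by ring) rfl rfl, ?_, ?_, ?_⟩,
    ⟨vectorField_hasFDerivAt r c m p a 1 _ _ _ (by ring) (by norm_num) (by ring),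
      ?_, ?_, ?_⟩⟩
  · nlinarith [mul_pos hr ha0]
  · exact mul_pos (mul_pos hr ha0) (by linarith)
  · intro h
    rw [lt_div_iff₀ ha0] at h
    exact mul_neg_of_pos_of_neg hm (by linarith)
  · intro h
    rw [div_lt_iff₀ ha0] at h
    exact mul_pos hm (by linarith)
  · nlinarith [mul_pos hr (sub_pos.mpr ha1)]
  · intro h
    exact mul_neg_of_pos_of_neg hm (by linarith)
  · intro h
    exact mul_pos hm (by linarith)
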